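/- Let 𝒜 be a cocomplete abelian category, ℬ an abelian category, F : 𝒜 ⟶ ℬ an exact functor admitting a fully faithful right adjoint G : ℬ ⟶ 𝒜, and set 𝒯 := Ker(F). If 𝒯₀ ⊆ 𝒯 is any subcategory such that 𝒯 = Gen(𝒯₀) (every object of 𝒯 is an epimorphic image of a coproduct of objects of 𝒯₀), then the essential image of G equals 𝒯₀^{⊥_{0,1}}, the full subcategory of objects Y of 𝒜 such that Hom_𝒜(T,Y) = 0 and Ext¹_𝒜(T,Y) = 0 for all T ∈ 𝒯₀. -/

import Mathlib

open CategoryTheory CategoryTheory.Limits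

universe v u u'

/-- `Ext¹_𝒜(T, Y) = 0`, expressed by the (equivalent) property that every short exact
sequence `0 ⟶ Y ⟶ E ⟶ T ⟶ 0` splits. -/
def Ext1Vanishes {A : Type u} [Category.{v} A] [Abelian A] (T Y : A) : Prop :=
  ∀ (E : A) (i : Y ⟶ E) (p : E ⟶ T) (w : i ≫ p = 0),
    (ShortComplex.mk i p w).ShortExact → ∃ s : T ⟶ E, s ≫ p = 𝟙 T

section Aux

variable {A : Type u} [Category.{v} A] [Abelian A]

/-- If `0 ⟶ Y ⟶ E ⟶ T ⟶ 0` is short exact and `Ext¹(T', Y) = 0`, then any morphism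
`f : T' ⟶ T` lifts along `p : E ⟶ T`.  (Pull back the extension along `f`.) -/
lemma exists_lift_of_ext1Vanishes {Y E T T' : A}
    (i : Y ⟶ E) (p : E ⟶ T) (w : i ≫ p = 0)
    (hse : (ShortComplex.mk i p w).ShortExact)
    (hext : Ext1Vanishes T' Y) (f : T' ⟶ T) :
    ∃ u : T' ⟶ E, u ≫ p = f := by
  haveI : Epi p := hse.epi_g
  haveI : Mono i := hse.mono_f
  haveI : Mono (ShortComplex.mk i p w).f := hse.mono_f
  have hjw : i ≫ p = (0 : Y ⟶ T') ≫ f := by rw [w, zero_comp]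
  set a := pullback.fst p f with ha
  set b := pullback.snd p f with hb
  set j : Y ⟶ pullback p f := pullback.lift i 0 hjw with hj
  have hja : j ≫ a = i := pullback.lift_fst _ _ _
  have hjb : j ≫ b = 0 := pullback.lift_snd _ _ _
  haveI : Mono j := mono_of_mono_fac hja
  have hker : IsLimit (KernelFork.ofι j hjb) := by
    refine KernelFork.IsLimit.ofι' j hjb (fun {W} z hz => ?_)
    obtain ⟨l, hl⟩ := KernelFork.IsLimit.lift' hse.exact.fIsKernel (z ≫ a)
      (by rw [Category.assoc, pullback.condition, ← Category.assoc, hz, zero_comp])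
    refine ⟨l, ?_⟩
    apply pullback.hom_ext
    · rw [Category.assoc]
      rw [hja]
      exact hl
    · rw [Category.assoc, hjb, comp_zero, hz]
  have hse' : (ShortComplex.mk j b hjb).ShortExact :=
    { exact := (ShortComplex.mk j b hjb).exact_of_f_is_kernel hker
      mono_f := ‹Mono j›
      epi_g := inferInstance }
  obtain ⟨s, hs⟩ := hext _ j b hjb hse'
  refine ⟨s ≫ a, ?_⟩
  rw [Category.assoc, pullback.condition, ← Category.assoc, hs, Category.id_comp]

end Aux

/-- let `𝒜` be a cocomplete abelian category, `ℬ` an abelian category,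
`F : 𝒜 ⥤ ℬ` an exact functor with a fully faithful right adjoint `G`, and
`𝒯 := Ker(F)`.  If `𝒯₀ ⊆ 𝒯` is a subcategory with `𝒯 = Gen(𝒯₀)` (every object of `𝒯`
is an epimorphic image of a coproduct of objects of `𝒯₀`), then the essential image of
`G` is exactly `𝒯₀^{⊥_{0,1}}`, the class of objects `Y` with
`Hom(T, Y) = 0 = Ext¹(T, Y)` for all `T ∈ 𝒯₀`. -/
theorem essImage_eq_perp01_of_generators_of_kernel
    {A : Type u} {B : Type u'} [Category.{v} A] [Category.{v} B]
    [Abelian A] [Abelian B] [HasColimits A]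
    (F : A ⥤ B) (G : B ⥤ A) (adj : F ⊣ G)
    [PreservesFiniteLimits F] [PreservesFiniteColimits F]
    [G.Full] [G.Faithful]
    (T₀ : Set A) (hT₀ : ∀ T ∈ T₀, IsZero (F.obj T))
    (hgen : ∀ X : A, IsZero (F.obj X) →
      ∃ (ι : Type v) (t : ι → A), (∀ k : ι, t k ∈ T₀) ∧ ∃ p : (∐ t) ⟶ X, Epi p) :
    ∀ Y : A, (∃ B₀ : B, Nonempty (G.obj B₀ ≅ Y)) ↔
      (∀ T ∈ T₀, (∀ f : T ⟶ Y, f = 0) ∧ Ext1Vanishes T Y) := by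
  haveI : F.IsLeftAdjoint := adj.isLeftAdjoint
  haveI : F.PreservesZeroMorphisms := inferInstance
  haveI : PreservesColimitsOfSize.{v, v} F := adj.leftAdjoint_preservesColimits
  -- a coproduct of objects of `Ker F` is in `Ker F`
  have hcoprodzero : ∀ {κ : Type v} (t : κ → A), (∀ k, t k ∈ T₀) →
      IsZero (F.obj (∐ t)) := by
    intro κ t hmem
    have hc : IsColimit (F.mapCocone (colimit.cocone (Discrete.functor t))) :=
      isColimitOfPreserves F (colimit.isColimit _)
    rw [IsZero.iff_id_eq_zero]
    exact hc.hom_ext fun j => (hT₀ _ (hmem j.as)).eq_of_src _ _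
  intro Y
  constructor
  · rintro ⟨B₀, ⟨e⟩⟩ T hT
    -- Hom vanishing
    have hhom : ∀ f : T ⟶ Y, f = 0 := by
      intro f
      have h0 : (adj.homEquiv T B₀).symm (f ≫ e.inv) = (adj.homEquiv T B₀).symm 0 :=
        (hT₀ T hT).eq_of_src _ _
      have h1 : f ≫ e.inv = 0 := (adj.homEquiv T B₀).symm.injective h0
      calc f = (f ≫ e.inv) ≫ e.hom := by simp
        _ = 0 := by rw [h1, zero_comp]
    refine ⟨hhom, ?_⟩
    intro E i p w hse
    haveI : Mono i := hse.mono_f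
    haveI : Epi p := hse.epi_g
    haveI : Epi (ShortComplex.mk i p w).g := hse.epi_g
    have hmap := hse.map_of_exact F
    have hp0 : F.map p = 0 := (hT₀ T hT).eq_of_tgt _ _
    haveI : Epi (F.map i) := hmap.exact.epi_f hp0
    haveI : Mono (F.map i) := hmap.mono_f
    haveI : IsIso (F.map i) := isIso_of_mono_of_epi _
    haveI : IsIso ((F ⋙ G).map i) := by
      show IsIso (G.map (F.map i)); infer_instance
    -- the unit is an isomorphism at `Y`
    haveI : IsIso (adj.unit.app (G.obj B₀)) := by
      have htri := adj.right_triangle_components B₀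
      have : adj.unit.app (G.obj B₀) = inv (G.map (adj.counit.app B₀)) := by
        rw [← cancel_mono (G.map (adj.counit.app B₀)), htri, IsIso.inv_hom_id]
        rfl
      rw [this]; infer_instance
    haveI : IsIso (adj.unit.app Y) := by
      have hnat := adj.unit.naturality e.hom
      simp only [Functor.id_map] at hnat
      have : adj.unit.app Y = e.inv ≫ adj.unit.app (G.obj B₀) ≫ (F ⋙ G).map e.hom := by
        rw [← hnat, ← Category.assoc, e.inv_hom_id, Category.id_comp]
      rw [this]; infer_instance
    -- retraction of `i`
    set r : E ⟶ Y := adj.unit.app E ≫ inv ((F ⋙ G).map i) ≫ inv (adj.unit.app Y) with hr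
    have hn := adj.unit.naturality i
    simp only [Functor.id_map] at hn
    have hir : i ≫ r = 𝟙 Y := by
      rw [hr, ← Category.assoc, hn, Category.assoc, IsIso.hom_inv_id_assoc,
        IsIso.hom_inv_id]
    -- splitting
    obtain ⟨s, hs⟩ := CokernelCofork.IsColimit.desc' hse.exact.gIsCokernel
      (𝟙 E - r ≫ i) (by
        show i ≫ (𝟙 E - r ≫ i) = 0
        rw [Preadditive.comp_sub, Category.comp_id, ← Category.assoc, hir,
          Category.id_comp, sub_self])
    have hs' : p ≫ s = 𝟙 E - r ≫ i := hs
    refine ⟨s, ?_⟩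
    have hps : p ≫ s ≫ p = p ≫ 𝟙 T := by
      rw [← Category.assoc, hs', Preadditive.sub_comp, Category.id_comp,
        Category.assoc, w, comp_zero, sub_zero, Category.comp_id]
    exact (cancel_epi p).1 hps
  · intro hY
    set η := adj.unit.app Y with hηdef
    haveI : IsIso (F.map η) := by
      have h := adj.left_triangle_components Y
      have h2 : F.map η = inv (adj.counit.app (F.obj Y)) := by
        rw [← cancel_mono (adj.counit.app (F.obj Y)), IsIso.inv_hom_id]
        exact h
      rw [h2]; infer_instance
    -- `η` is a monomorphism
    have hK : IsZero (F.obj (kernel η)) := by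
      haveI : Mono (F.map (kernel.ι η)) := preserves_mono_of_preservesLimit F _
      have h0 : F.map (kernel.ι η) = 0 := by
        have h2 : F.map (kernel.ι η) ≫ F.map η = 0 ≫ F.map η := by
          rw [← F.map_comp, kernel.condition, F.map_zero, zero_comp]
        exact (cancel_mono (F.map η)).1 h2
      rw [IsZero.iff_id_eq_zero, ← cancel_mono (F.map (kernel.ι η)), Category.id_comp,
        h0, zero_comp]
    obtain ⟨κ₀, t₀, hmem₀, q₀, hq₀⟩ := hgen (kernel η) hK
    haveI : Epi q₀ := hq₀
    haveI hmono : Mono η := by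
      apply Abelian.mono_of_kernel_ι_eq_zero
      have h1 : q₀ ≫ kernel.ι η = q₀ ≫ 0 := by
        rw [comp_zero]
        exact Sigma.hom_ext _ _ fun k => by
          rw [comp_zero]
          exact (hY _ (hmem₀ k)).1 _
      exact (cancel_epi q₀).1 h1
    -- the cokernel of `η` is in `Ker F`
    have hC : IsZero (F.obj (cokernel η)) := by
      haveI : Epi (F.map (cokernel.π η)) := preserves_epi_of_preservesColimit F _
      have h0 : F.map (cokernel.π η) = 0 := by
        have h2 : F.map η ≫ F.map (cokernel.π η) = F.map η ≫ 0 := by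
          rw [← F.map_comp, cokernel.condition, F.map_zero, comp_zero]
        exact (cancel_epi (F.map η)).1 h2
      rw [IsZero.iff_id_eq_zero, ← cancel_epi (F.map (cokernel.π η)), Category.comp_id,
        h0, comp_zero]
    -- the short exact sequence `0 ⟶ Y ⟶ GFY ⟶ C ⟶ 0`
    have hseη : (ShortComplex.mk η (cokernel.π η) (cokernel.condition η)).ShortExact :=
      { exact := (ShortComplex.mk η (cokernel.π η) (cokernel.condition η)).exact_of_g_is_cokernel
          (cokernelIsCokernel η)
        mono_f := hmono
        epi_g := inferInstance }
    obtain ⟨κ, t, hmem, q, hq⟩ := hgen (cokernel η) hC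
    haveI : Epi q := hq
    -- lift `q` along the cokernel projection, componentwise
    have hu : ∀ k : κ, ∃ u : t k ⟶ (F ⋙ G).obj Y,
        u ≫ cokernel.π η = Sigma.ι t k ≫ q := fun k =>
      exists_lift_of_ext1Vanishes η (cokernel.π η) (cokernel.condition η) hseη
        ((hY _ (hmem k)).2) _
    choose u huk using hu
    set U : (∐ t) ⟶ (F ⋙ G).obj Y := Sigma.desc u with hU
    have hUp : U ≫ cokernel.π η = q := by
      refine Sigma.hom_ext _ _ fun k => ?_
      rw [← Category.assoc, hU, colimit.ι_desc]
      exact huk k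
    -- the kernel of `q` is in `Ker F`
    have hKq : IsZero (F.obj (kernel q)) := by
      have hz1 : IsZero (F.obj (∐ t)) := hcoprodzero t hmem
      haveI : Mono (F.map (kernel.ι q)) := preserves_mono_of_preservesLimit F _
      have h0 : F.map (kernel.ι q) = 0 := hz1.eq_of_tgt _ _
      rw [IsZero.iff_id_eq_zero, ← cancel_mono (F.map (kernel.ι q)), Category.id_comp,
        h0, zero_comp]
    -- `U` kills the kernel of `q`
    have hUkill : kernel.ι q ≫ U = 0 := by
      obtain ⟨v, hv⟩ := KernelFork.IsLimit.lift' hseη.exact.fIsKernel (kernel.ι q ≫ U)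
        (by rw [Category.assoc, hUp, kernel.condition])
      obtain ⟨κ₁, t₁, hmem₁, r₁, hr₁⟩ := hgen (kernel q) hKq
      haveI : Epi r₁ := hr₁
      have hv0 : v = 0 := by
        have h1 : r₁ ≫ v = r₁ ≫ 0 := by
          rw [comp_zero]
          exact Sigma.hom_ext _ _ fun k => by
            rw [comp_zero]
            exact (hY _ (hmem₁ k)).1 _
        exact (cancel_epi r₁).1 h1
      rw [← hv, hv0, zero_comp]
    -- descend `U` to a section of the cokernel projection
    set s : cokernel η ⟶ (F ⋙ G).obj Y := Abelian.epiDesc q U hUkill with hsdef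
    have hqs : q ≫ s = U := Abelian.comp_epiDesc q U hUkill
    have hsect : s ≫ cokernel.π η = 𝟙 (cokernel η) := by
      have h1 : q ≫ s ≫ cokernel.π η = q ≫ 𝟙 (cokernel η) := by
        rw [← Category.assoc, hqs, hUp, Category.comp_id]
      exact (cancel_epi q).1 h1
    -- but `s = 0`, since `F (cokernel η) = 0`
    have hs0 : s = 0 := by
      have h0 : (adj.homEquiv (cokernel η) (F.obj Y)).symm s =
          (adj.homEquiv (cokernel η) (F.obj Y)).symm 0 := hC.eq_of_src _ _
      exact (adj.homEquiv (cokernel η) (F.obj Y)).symm.injective h0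
    have hCzero : IsZero (cokernel η) := by
      rw [IsZero.iff_id_eq_zero, ← hsect, hs0, zero_comp]
    haveI : Epi η := Abelian.epi_of_cokernel_π_eq_zero η (hCzero.eq_of_tgt _ _)
    haveI : IsIso η := isIso_of_mono_of_epi η
    exact ⟨F.obj Y, ⟨(asIso η).symm⟩⟩
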